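/- For every h ∈ {1,…,q_0} and k ∈ {0,…,2h−2}, the element ν_{h,k} = hq − kq_0 − ⌊(2h−k−2)/2⌋ of G_1 does not belong to the additive submonoid of ℕ generated by G ∖ {ν_{h,k}}, where G = G_1 ∪ F_2. -/
import Mathlib


/-- `q₀ = 2^s`. -/
def q0 (s : ℕ) : ℕ := 2 ^ s

/-- `q = 2 q₀²`. -/
def qS (s : ℕ) : ℕ := 2 * q0 s ^ 2

/-- `m_{j,k,ℓ} = ⌈(q₀/(q₀−1))·(j + k + ℓ − (k+ℓ)/q)⌉`. -/
def mval (s j k l : ℕ) : ℤ :=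
  ⌈((q0 s : ℚ) / ((q0 s : ℚ) - 1)) *
    ((j : ℚ) + (k : ℚ) + (l : ℚ) - ((k : ℚ) + (l : ℚ)) / (qS s : ℚ))⌉

/-- `F₁ = { hq − (ℓ+2k)q₀ − j : ℓ ∈ {0,1}, k,j ∈ {0,…,q₀−1},
    h ∈ {max{1, m_{j,k,ℓ}},…,2q₀} }`. -/
def F1 (s : ℕ) : Set ℕ :=
  {n | ∃ h j k l : ℕ, l ≤ 1 ∧ k < q0 s ∧ j < q0 s ∧
    max 1 (mval s j k l) ≤ (h : ℤ) ∧ h ≤ 2 * q0 s ∧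
    n = h * qS s - (l + 2 * k) * q0 s - j}

/-- `F₂ = { hq − (2h−2q₀−1)q₀ − (q₀−1) : h ∈ {q₀+1,…,2q₀} }`. -/
def F2 (s : ℕ) : Set ℕ :=
  {n | ∃ h : ℕ, q0 s + 1 ≤ h ∧ h ≤ 2 * q0 s ∧
    n = h * qS s - (2 * h - 2 * q0 s - 1) * q0 s - (q0 s - 1)}

/-- `G₁ = { hq − kq₀ − ⌊(2h−k−2)/2⌋ : h ∈ {1,…,q₀}, k ∈ {0,…,2h−2} }`. -/
def G1 (s : ℕ) : Set ℕ :=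
  {n | ∃ h k : ℕ, 1 ≤ h ∧ h ≤ q0 s ∧ k ≤ 2 * h - 2 ∧
    n = h * qS s - k * q0 s - (2 * h - k - 2) / 2}

/-- Every generator `g ∈ G₁ ∪ F₂` has the form `H·q − kk·q₀ − f` with
`f = H − 1 − ⌈kk/2⌉`. -/
lemma gen_decomp (s : ℕ) (hs : 1 ≤ s) (g : ℕ) (hg : g ∈ G1 s ∪ F2 s) :
    ∃ H kk f : ℕ, H = (kk + 1) / 2 + f + 1 ∧
      (g : ℤ) = (H : ℤ) * qS s - (kk : ℤ) * q0 s - (f : ℤ) := by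
  have hQ : 2 ≤ q0 s := by
    have : 2 ^ 1 ≤ 2 ^ s := Nat.pow_le_pow_right (by norm_num) hs
    simpa [q0] using this
  have hq : qS s = 2 * q0 s ^ 2 := rfl
  rcases hg with ⟨H, kk, hH1, hH2, hkk, rfl⟩ | ⟨H, hH1, hH2, rfl⟩
  · refine ⟨H, kk, (2 * H - kk - 2) / 2, by omega, ?_⟩
    have key : kk * q0 s + (2 * H - kk - 2) / 2 < H * qS s := by
      have b1 : (kk : ℤ) ≤ 2 * H - 2 := by omega
      have b2 : ((2 * H - kk - 2) / 2 : ℕ) ≤ (H : ℤ) - 1 := by omega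
      have b3 : (H : ℤ) ≤ q0 s := by omega
      have b4 : (2 : ℤ) ≤ q0 s := by omega
      have b5 : (1 : ℤ) ≤ (H : ℤ) := by omega
      have : (kk : ℤ) * q0 s + ((2 * H - kk - 2) / 2 : ℕ) < H * (2 * (q0 s:ℤ) ^ 2) := by
        nlinarith [mul_nonneg (sub_nonneg.2 b5) (sub_nonneg.2 b4),
          mul_le_mul_of_nonneg_right b1 (by linarith : (0:ℤ) ≤ q0 s)]
      rw [hq]; exact_mod_cast this
    have c1 : ((H * qS s - kk * q0 s - (2 * H - kk - 2) / 2 : ℕ) : ℤ)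
        = ((H * qS s : ℕ) : ℤ) - ((kk * q0 s : ℕ) : ℤ) - ((2 * H - kk - 2) / 2 : ℕ) := by
      omega
    rw [c1, Nat.cast_mul, Nat.cast_mul]
  · refine ⟨H, 2 * H - 2 * q0 s - 1, q0 s - 1, by omega, ?_⟩
    have key : (2 * H - 2 * q0 s - 1) * q0 s + (q0 s - 1) < H * qS s := by
      have b1 : ((2 * H - 2 * q0 s - 1 : ℕ) : ℤ) = 2 * H - 2 * q0 s - 1 := by omega
      have b3 : (H : ℤ) ≤ 2 * q0 s := by omega
      have b4 : (2 : ℤ) ≤ q0 s := by omega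
      have b5 : (q0 s : ℤ) + 1 ≤ H := by omega
      have : ((2 * H - 2 * q0 s - 1 : ℕ) : ℤ) * q0 s + ((q0 s - 1 : ℕ) : ℤ)
          < H * (2 * (q0 s : ℤ) ^ 2) := by
        rw [b1]
        have b6 : ((q0 s - 1 : ℕ) : ℤ) = (q0 s : ℤ) - 1 := by omega
        rw [b6]
        nlinarith [mul_le_mul_of_nonneg_right b3 (by linarith : (0:ℤ) ≤ q0 s)]
      have key' : ((2 * H - 2 * q0 s - 1) * q0 s + (q0 s - 1) : ℕ) < ((H * qS s : ℕ)) := by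
        have := this
        rw [hq]
        exact_mod_cast this
      exact key'
    have c1 : ((H * qS s - (2 * H - 2 * q0 s - 1) * q0 s - (q0 s - 1) : ℕ) : ℤ)
        = ((H * qS s : ℕ) : ℤ) - (((2 * H - 2 * q0 s - 1) * q0 s : ℕ) : ℤ)
          - ((q0 s - 1 : ℕ) : ℤ) := by omega
    rw [c1, Nat.cast_mul, Nat.cast_mul]
/-- Aggregation invariant over a multiset of generators. -/
lemma sum_invariant (s : ℕ) (l : Multiset ℕ)
    (hl : ∀ g ∈ l, ∃ H kk f : ℕ, H = (kk + 1) / 2 + f + 1 ∧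
      (g : ℤ) = (H : ℤ) * qS s - (kk : ℤ) * q0 s - (f : ℤ)) :
    ∃ A K C : ℕ, (K + 1) / 2 ≤ C ∧ C ≤ K ∧ C + Multiset.card l ≤ A ∧
      (l.sum : ℤ) = (A : ℤ) * qS s - (K : ℤ) * q0 s
        - ((A : ℤ) - Multiset.card l - C) := by
  induction l using Multiset.induction with
  | empty => exact ⟨0, 0, 0, by simp, by simp, by simp, by simp⟩
  | cons g t ih =>
    obtain ⟨H, kk, f, hH, hg⟩ := hl g (Multiset.mem_cons_self g t)
    obtain ⟨A, K, C, h1, h2, h3, h4⟩ :=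
      ih (fun x hx => hl x (Multiset.mem_cons_of_mem hx))
    set c2 : ℕ := (kk + 1) / 2 with hc2
    refine ⟨A + H, K + kk, C + c2, by omega, by omega, ?_, ?_⟩
    · rw [Multiset.card_cons]; omega
    · rw [Multiset.sum_cons, Multiset.card_cons, Nat.cast_add, hg, h4]
      have hf : (f : ℤ) = (H : ℤ) - 1 - (c2 : ℤ) := by omega
      rw [hf]
      push_cast [← hc2]
      ring

/-- The purely arithmetic contradiction over `ℤ`. -/
lemma arith_contra (Q a kk c mm hh kq c0 : ℤ)
    (hQ2 : 2 ≤ Q) (hm : 2 ≤ mm) (hh1 : 1 ≤ hh) (hh2 : hh ≤ Q)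
    (hkq0 : 0 ≤ kq) (hc00 : 0 ≤ c0) (hkqc0 : kq ≤ 2 * c0) (hkqc0' : 2 * c0 ≤ kq + 1)
    (hkhh : kq ≤ 2 * hh - 2)
    (hK2C : kk ≤ 2 * c) (hCK : c ≤ kk) (hC0 : 0 ≤ c) (hCm : c + mm ≤ a)
    (heq : a * (2 * Q ^ 2) - kk * Q - (a - mm - c)
        = hh * (2 * Q ^ 2) - kq * Q - (hh - 1 - c0)) :
    False := by
  have l0 : (0:ℤ) ≤ Q := by linarith
  have hf0 : 0 ≤ hh - 1 - c0 := by omega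
  rcases lt_trichotomy a hh with hAh | hAh | hAh
  · have l1 : 0 ≤ (hh - a - 1) * Q ^ 2 := mul_nonneg (by linarith) (sq_nonneg Q)
    have l2 : kq * Q ≤ (2 * hh - 2) * Q := mul_le_mul_of_nonneg_right hkhh l0
    have l3 : (2 * hh - 2) * Q ≤ (2 * Q - 2) * Q := mul_le_mul_of_nonneg_right (by linarith) l0
    have l4 : 0 ≤ kk * Q := mul_nonneg (by linarith) l0
    nlinarith [l1, l2, l3, l4, heq, sq_nonneg Q]
  · subst hAh
    have e5 : (kq - kk) * Q = 1 + c0 - mm - c := by nlinarith [heq]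
    have hkq : kq = kk := by
      rcases lt_trichotomy kq kk with hlt | he | hgt
      · exfalso
        have : Q ≤ (kk - kq) * Q := le_mul_of_one_le_left l0 (by linarith)
        nlinarith [e5, this]
      · exact he
      · exfalso
        have : Q ≤ (kq - kk) * Q := le_mul_of_one_le_left l0 (by linarith)
        nlinarith [e5, this]
    have e6 : (0:ℤ) = 1 + c0 - mm - c := by
      rw [hkq] at e5; linarith [e5]
    omega
  · have q1 : 0 ≤ (2 * c - kk) * Q := mul_nonneg (by linarith) l0
    have q2 : 0 ≤ (a - mm - c) * (2 * Q - 1) := mul_nonneg (by linarith) (by linarith)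
    have q3 : 0 ≤ kq * Q := mul_nonneg hkq0 l0
    have hX : 1 ≤ (a - hh) * (Q - 1) - (hh - mm) := by
      have p1 : 0 ≤ (a - hh - 1) * (Q - 1) := mul_nonneg (by linarith) (by linarith)
      nlinarith [p1]
    have p3 : 2 * Q ≤ 2 * Q * ((a - hh) * (Q - 1) - (hh - mm)) :=
      le_mul_of_one_le_right (by linarith) hX
    nlinarith [heq, q1, q2, q3, p3, hf0]

/-- No `ν_{h,k} ∈ G₁` belongs to the submonoid generated by `(G₁ ∪ F₂) \ {ν_{h,k}}`. -/
theorem stmt13 (s : ℕ) (hs : 1 ≤ s) (h k : ℕ)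
    (hh₁ : 1 ≤ h) (hh₂ : h ≤ q0 s) (hk : k ≤ 2 * h - 2) :
    h * qS s - k * q0 s - (2 * h - k - 2) / 2 ∉
      AddSubmonoid.closure
        ((G1 s ∪ F2 s) \ {h * qS s - k * q0 s - (2 * h - k - 2) / 2}) := by
  intro hmem
  have hQ : 2 ≤ q0 s := by
    have : 2 ^ 1 ≤ 2 ^ s := Nat.pow_le_pow_right (by norm_num) hs
    simpa [q0] using this
  have hq : qS s = 2 * q0 s ^ 2 := rfl
  set ν : ℕ := h * qS s - k * q0 s - (2 * h - k - 2) / 2 with hν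
  have key : k * q0 s + (2 * h - k - 2) / 2 < h * qS s := by
    have b1 : (k : ℤ) ≤ 2 * h - 2 := by omega
    have b2 : ((2 * h - k - 2) / 2 : ℕ) ≤ (h : ℤ) - 1 := by omega
    have b3 : (h : ℤ) ≤ q0 s := by omega
    have b4 : (2 : ℤ) ≤ q0 s := by omega
    have b5 : (1 : ℤ) ≤ (h : ℤ) := by omega
    have : (k : ℤ) * q0 s + ((2 * h - k - 2) / 2 : ℕ) < h * (2 * (q0 s : ℤ) ^ 2) := by
      nlinarith [mul_nonneg (sub_nonneg.2 b5) (sub_nonneg.2 b4),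
        mul_le_mul_of_nonneg_right b1 (by linarith : (0:ℤ) ≤ q0 s)]
    rw [hq]; exact_mod_cast this
  have hνZ : (ν : ℤ) = (h : ℤ) * qS s - (k : ℤ) * q0 s - ((2 * h - k - 2) / 2 : ℕ) := by
    have c1 : ((h * qS s - k * q0 s - (2 * h - k - 2) / 2 : ℕ) : ℤ)
        = ((h * qS s : ℕ) : ℤ) - ((k * q0 s : ℕ) : ℤ) - ((2 * h - k - 2) / 2 : ℕ) := by
      omega
    rw [hν, c1, Nat.cast_mul, Nat.cast_mul]
  have hνpos : 1 ≤ ν := by omega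
  obtain ⟨l, hlmem, hlsum⟩ := AddSubmonoid.exists_multiset_of_mem_closure hmem
  obtain ⟨A, K, C, i1, i2, i3, i4⟩ := sum_invariant s l (fun g hg =>
    gen_decomp s hs g (hlmem g hg).1)
  rcases Nat.lt_or_ge (Multiset.card l) 2 with hm | hm
  · have hcases : Multiset.card l = 0 ∨ Multiset.card l = 1 := by omega
    rcases hcases with h0 | h1
    · rw [Multiset.card_eq_zero] at h0
      rw [h0] at hlsum
      simp at hlsum
      omega
    · obtain ⟨a, rfl⟩ := Multiset.card_eq_one.mp h1
      have hane := (hlmem a (by simp)).2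
      simp at hlsum
      exact hane (by simpa using hlsum)
  · rw [hlsum, hνZ] at i4
    have c0def : (((2 * h - k - 2) / 2 : ℕ) : ℤ) = (h : ℤ) - 1 - (((k + 1) / 2 : ℕ) : ℤ) := by
      omega
    rw [c0def, hq] at i4
    have hqZ : ((2 * q0 s ^ 2 : ℕ) : ℤ) = 2 * (q0 s : ℤ) ^ 2 := by push_cast; ring
    rw [hqZ] at i4
    refine arith_contra (q0 s : ℤ) A K C (Multiset.card l) h k (((k + 1) / 2 : ℕ) : ℤ)
      (by omega) (by omega) (by omega) (by omega) (by omega) (by omega) (by omega)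
      (by omega) (by omega) (by omega) (by omega) (by omega) (by omega) ?_
    linarith [i4]
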